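/- arXiv:1110.3743 — 3 statements merged into one kernel-verified Lean document; each statement's English description precedes it below -/
import Mathlib

section
/- Let G be a residually nilpotent group and let ψ be a nontrivial automorphism of G that induces the identity on the abelianization G^ab. Then there exists a nilpotent quotient N of G and an element g ∈ N such that the automorphism induced by ψ on N sends g to g·z for some nontrivial central element z of N. -/
lemma lcs_pi_le {M : Type*} [Group M] (c : ℕ) (hM : (⊤ : Subgroup M).lowerCentralSeries c = ⊥) :
    (⊤ : Subgroup (ℕ → M)).lowerCentralSeries c = ⊥ := by
  rw [eq_bot_iff]
  intro x hx
  have : ∀ n : ℕ, x n = 1 := by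
    intro n
    have hmem : x n ∈ (⊤ : Subgroup M).lowerCentralSeries c :=
      lowerCentralSeries.map (Pi.evalMonoidHom (fun _ => M) n) c ⟨x, hx, rfl⟩
    rw [hM] at hmem
    simpa using hmem
  simpa using (funext this : x = 1)

/-- Residually nilpotent: every nontrivial element survives in some nilpotent quotient. -/
theorem stmt_0 {G : Type*} [Group G]
    (hres : ∀ g : G, g ≠ 1 → ∃ (N : Type) (_ : Group N) (π : G →* N),
      Function.Surjective π ∧ Group.IsNilpotent N ∧ π g ≠ 1)
    (ψ : MulAut G) (hψ : ψ ≠ 1)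
    (hab : ∀ g : G, ψ g * g⁻¹ ∈ commutator G) :
    ∃ (N : Type) (_ : Group N) (π : G →* N) (ψ' : N →* N),
      Function.Surjective π ∧ Group.IsNilpotent N ∧
      ψ'.comp π = π.comp ψ.toMonoidHom ∧
      ∃ (g : G) (z : N), z ∈ Subgroup.center N ∧ z ≠ 1 ∧ ψ' (π g) = π g * z := by
  classical
  -- get g with ψ g ≠ g
  obtain ⟨g, hg⟩ : ∃ g : G, ψ g ≠ g := by
    by_contra h
    push_neg at h
    exact hψ (MulEquiv.ext fun x => h x)
  set w : G := ψ g * g⁻¹ with hw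
  have hw1 : w ≠ 1 := by
    intro h
    exact hg (by simpa [hw, mul_inv_eq_one] using h)
  obtain ⟨M, _, π₀, hπ₀s, hMnil, hπ₀w⟩ := hres w hw1
  obtain ⟨c, hc⟩ := nilpotent_iff_lowerCentralSeries.mp hMnil
  -- the ψ-equivariant small quotient: map into a product over ℕ
  let f : G →* (ℕ → M) :=
    { toFun := fun x n => π₀ ((ψ ^ n) x)
      map_one' := by funext n; simp
      map_mul' := by intro x y; funext n; simp }
  let Q : Subgroup (ℕ → M) := f.range
  let π₁ : G →* Q := f.rangeRestrict
  have hπ₁s : Function.Surjective π₁ := f.rangeRestrict_surjective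
  -- (ℕ → M) is nilpotent, hence so is Q
  have hPnil : Group.IsNilpotent (ℕ → M) :=
    nilpotent_iff_lowerCentralSeries.mpr ⟨c, lcs_pi_le c hc⟩
  have hQnil : Group.IsNilpotent Q := Subgroup.isNilpotent Q
  -- the shift map, intertwining with ψ
  let shift : (ℕ → M) →* (ℕ → M) :=
    { toFun := fun x n => x (n + 1)
      map_one' := rfl
      map_mul' := fun _ _ => rfl }
  have hshift : ∀ x : G, shift (f x) = f (ψ x) := by
    intro x
    funext n
    show π₀ ((ψ ^ (n + 1)) x) = π₀ ((ψ ^ n) (ψ x))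
    rw [pow_succ]
    rfl
  have hshiftQ : ∀ y : Q, shift ((Q.subtype) y) ∈ Q := by
    rintro ⟨y, x, rfl⟩
    exact ⟨ψ x, (hshift x).symm⟩
  let ψ₁ : Q →* Q := (shift.comp Q.subtype).codRestrict Q hshiftQ
  have hψ₁ : ∀ x : G, ψ₁ (π₁ x) = π₁ (ψ x) := by
    intro x
    apply Subtype.ext
    exact hshift x
  -- the image of w in Q is nontrivial
  have hQw : π₁ w ≠ 1 := by
    intro h
    apply hπ₀w
    have : f w = 1 := by
      have h2 := congrArg Subtype.val h
      exact h2
    have := congrFun this 0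
    simpa [f] using this
  -- find the maximal level of π₁ w in the lower central series of Q
  have hescape : ∃ m : ℕ, π₁ w ∉ (⊤ : Subgroup Q).lowerCentralSeries m := by
    obtain ⟨d, hd⟩ := nilpotent_iff_lowerCentralSeries.mp hQnil
    exact ⟨d, fun hmem => hQw (by rw [hd] at hmem; simpa using hmem)⟩
  let m := Nat.find hescape
  have hmspec : π₁ w ∉ (⊤ : Subgroup Q).lowerCentralSeries m := Nat.find_spec hescape
  have hm1 : 1 ≤ m := by
    by_contra h
    push_neg at h
    interval_cases m
    · exact hmspec (Subgroup.mem_top _)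
  obtain ⟨k, hk⟩ : ∃ k, m = k + 1 := ⟨m - 1, (Nat.succ_pred_eq_of_pos hm1).symm⟩
  have hwk : π₁ w ∈ (⊤ : Subgroup Q).lowerCentralSeries k := by
    by_contra h
    exact Nat.find_min hescape (by omega : k < m) h
  have hwk1 : π₁ w ∉ (⊤ : Subgroup Q).lowerCentralSeries (k + 1) := hk ▸ hmspec
  -- quotient Q by γ_{k+1}
  let H : Subgroup Q := (⊤ : Subgroup Q).lowerCentralSeries (k + 1)
  haveI : H.Normal := Subgroup.lowerCentralSeries_normal ⊤ (k + 1)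
  let ρ : Q →* Q ⧸ H := QuotientGroup.mk' H
  have hρs : Function.Surjective ρ := QuotientGroup.mk'_surjective H
  have hψ₁H : H ≤ Subgroup.comap ψ₁ H := by
    intro x hx
    exact lowerCentralSeries.map ψ₁ (k + 1) ⟨x, hx, rfl⟩
  let ψ' : Q ⧸ H →* Q ⧸ H := QuotientGroup.map H H ψ₁ hψ₁H
  let π : G →* Q ⧸ H := ρ.comp π₁
  have hπs : Function.Surjective π := hρs.comp hπ₁s
  have hnil : Group.IsNilpotent (Q ⧸ H) := nilpotent_of_surjective ρ hρs
  have hcomm : ψ'.comp π = π.comp ψ.toMonoidHom := by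
    ext x
    show ψ' (ρ (π₁ x)) = ρ (π₁ (ψ x))
    rw [← hψ₁ x]
    rfl
  -- the central element
  set z : Q ⧸ H := π w with hz
  have hzc : z ∈ Subgroup.center (Q ⧸ H) := by
    rw [Subgroup.mem_center_iff]
    intro y
    obtain ⟨b, rfl⟩ := hρs y
    letI : Bracket Q Q := commutatorElement
    have hcom : ⁅π₁ w, b⁆ ∈ H :=
      Subgroup.commutator_mem_commutator hwk (Subgroup.mem_top b)
    have h1 : ρ ⁅π₁ w, b⁆ = 1 := (QuotientGroup.eq_one_iff _).mpr hcom
    rw [map_commutatorElement] at h1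
    exact (commutatorElement_eq_one_iff_mul_comm.mp h1).symm
  have hz1 : z ≠ 1 := by
    intro h
    exact hwk1 ((QuotientGroup.eq_one_iff _).mp h)
  refine ⟨Q ⧸ H, inferInstance, π, ψ', hπs, hnil, hcomm, g, z, hzc, hz1, ?_⟩
  have h1 : ψ' (π g) = π (ψ g) := congrFun (congrArg DFunLike.coe hcomm) g
  have h2 : ψ g = w * g := by rw [hw]; group
  rw [h1, h2, map_mul]
  exact (Subgroup.mem_center_iff.mp hzc (π g)).symm
end

section
/- Let G be a residually torsion-free nilpotent group and let ψ be a nontrivial automorphism of G that induces the identity on G^ab. Then ψ has infinite order in Aut(G). -/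
/-- A monoid is torsion-free if no nontrivial element has finite order
(the definition `Monoid.IsTorsionFree` of the older Mathlib, since removed). -/
def Monoid.IsTorsionFree (G : Type*) [Monoid G] : Prop :=
  ∀ g : G, g ≠ 1 → ¬IsOfFinOrder g

universe u
open scoped commutatorElement

open Subgroup

section Aux
variable {G : Type*} [Group G]

lemma lcs_succ_eq (n : ℕ) : Subgroup.lowerCentralSeries (⊤ : Subgroup G) (n+1) = ⁅Subgroup.lowerCentralSeries (⊤ : Subgroup G) n, ⊤⁆ := rfl

lemma map_lcs_eq {H : Type*} [Group H] (f : G →* H) (hf : Function.Surjective f) (n : ℕ) :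
    Subgroup.map f (Subgroup.lowerCentralSeries (⊤ : Subgroup G) n) = Subgroup.lowerCentralSeries (⊤ : Subgroup H) n := by
  induction n with
  | zero =>
    simp only [Subgroup.lowerCentralSeries_zero]
    exact Subgroup.map_top_of_surjective f hf
  | succ n ih =>
    rw [lcs_succ_eq, lcs_succ_eq, Subgroup.map_commutator, ih,
      Subgroup.map_top_of_surjective f hf]

lemma three_subgroups {A B C N : Subgroup G} [N.Normal] (h1 : ⁅⁅B, C⁆, A⁆ ≤ N)
    (h2 : ⁅⁅C, A⁆, B⁆ ≤ N) : ⁅⁅A, B⁆, C⁆ ≤ N := by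
  have key : ∀ X Y Z : Subgroup G, ⁅⁅X, Y⁆, Z⁆ ≤ N ↔
      ⁅⁅Subgroup.map (QuotientGroup.mk' N) X, Subgroup.map (QuotientGroup.mk' N) Y⁆,
        Subgroup.map (QuotientGroup.mk' N) Z⁆ = ⊥ := by
    intro X Y Z
    rw [← Subgroup.map_commutator, ← Subgroup.map_commutator, Subgroup.map_eq_bot_iff,
      QuotientGroup.ker_mk']
  rw [key]
  exact Subgroup.commutator_commutator_eq_bot_of_rotate ((key _ _ _).mp h1) ((key _ _ _).mp h2)

lemma lcs_comm (j : ℕ) : ∀ i : ℕ,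
    ⁅Subgroup.lowerCentralSeries (⊤ : Subgroup G) i, Subgroup.lowerCentralSeries (⊤ : Subgroup G) j⁆ ≤ Subgroup.lowerCentralSeries (⊤ : Subgroup G) (i + j + 1) := by
  induction j with
  | zero =>
    intro i
    rw [Subgroup.lowerCentralSeries_zero, ← lcs_succ_eq]
  | succ j ih =>
    intro i
    rw [Subgroup.commutator_comm, lcs_succ_eq]
    have h1 : ⁅⁅(⊤ : Subgroup G), Subgroup.lowerCentralSeries (⊤ : Subgroup G) i⁆, Subgroup.lowerCentralSeries (⊤ : Subgroup G) j⁆ ≤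
        Subgroup.lowerCentralSeries (⊤ : Subgroup G) (i + (j+1) + 1) := by
      rw [Subgroup.commutator_comm (⊤ : Subgroup G), ← lcs_succ_eq]
      have := ih (i + 1)
      have e : i + 1 + j + 1 = i + (j + 1) + 1 := by omega
      rwa [e] at this
    have h2 : ⁅⁅Subgroup.lowerCentralSeries (⊤ : Subgroup G) i, Subgroup.lowerCentralSeries (⊤ : Subgroup G) j⁆, (⊤ : Subgroup G)⁆ ≤
        Subgroup.lowerCentralSeries (⊤ : Subgroup G) (i + (j+1) + 1) := by
      calc ⁅⁅Subgroup.lowerCentralSeries (⊤ : Subgroup G) i, Subgroup.lowerCentralSeries (⊤ : Subgroup G) j⁆, (⊤ : Subgroup G)⁆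
          ≤ ⁅Subgroup.lowerCentralSeries (⊤ : Subgroup G) (i + j + 1), (⊤ : Subgroup G)⁆ :=
            Subgroup.commutator_mono (ih i) le_rfl
        _ = Subgroup.lowerCentralSeries (⊤ : Subgroup G) (i + j + 2) := (lcs_succ_eq _).symm
        _ = Subgroup.lowerCentralSeries (⊤ : Subgroup G) (i + (j+1) + 1) := by ring_nf
    exact three_subgroups h1 h2

end Aux

open Subgroup

section TF
variable {G : Type*} [Group G]

lemma commutator_pow_left' (x y : G) (hc : ∀ z : G, Commute ⁅x, y⁆ z) (m : ℕ) :
    ⁅x ^ m, y⁆ = ⁅x, y⁆ ^ m := by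
  induction m with
  | zero => simp
  | succ m ih =>
    have key : ∀ w : G, ⁅x * w, y⁆ = x * ⁅w, y⁆ * x⁻¹ * ⁅x, y⁆ := by
      intro w
      simp only [commutatorElement_def]
      group
    rw [pow_succ' x m, key, ih]
    have h1 : Commute (⁅x, y⁆ ^ m) x⁻¹ := ((hc x⁻¹).pow_left m)
    calc x * ⁅x, y⁆ ^ m * x⁻¹ * ⁅x, y⁆ = x * x⁻¹ * (⁅x, y⁆ ^ m * ⁅x, y⁆) := by
          rw [mul_assoc x, h1.eq, ← mul_assoc, ← mul_assoc, mul_assoc (x * x⁻¹)]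
      _ = ⁅x, y⁆ ^ (m + 1) := by rw [mul_inv_cancel, one_mul, pow_succ]

lemma center_tf_quotient (hZ : ∀ x ∈ center G, ∀ m : ℕ, 0 < m → x ^ m = 1 → x = 1) :
    ∀ x ∈ center (G ⧸ center G), ∀ m : ℕ, 0 < m → x ^ m = 1 → x = 1 := by
  intro xb hxb m hm hpow
  obtain ⟨x, rfl⟩ := QuotientGroup.mk_surjective xb
  have hxm : x ^ m ∈ center G := by
    rw [← QuotientGroup.mk_pow] at hpow
    exact (QuotientGroup.eq_one_iff _).mp hpow
  have hcomm : ∀ y : G, ⁅x, y⁆ ∈ center G := by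
    intro y
    have h := Subgroup.mem_center_iff.mp hxb (y : G ⧸ center G)
    have h2 : ((⁅x, y⁆ : G) : G ⧸ center G) = ⁅(x : G ⧸ center G), (y : G ⧸ center G)⁆ := by
      simp [commutatorElement_def]
    have h3 : ((⁅x, y⁆ : G) : G ⧸ center G) = 1 := by
      rw [h2, commutatorElement_eq_one_iff_commute]
      exact h.symm
    exact (QuotientGroup.eq_one_iff _).mp h3
  have hxcen : x ∈ center G := by
    rw [Subgroup.mem_center_iff]
    intro y
    have hc : ∀ z : G, Commute ⁅x, y⁆ z := fun z =>
      (Subgroup.mem_center_iff.mp (hcomm y) z).symm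
    have h1 : ⁅x ^ m, y⁆ = 1 := by
      rw [commutatorElement_eq_one_iff_commute]
      exact (Subgroup.mem_center_iff.mp hxm y).symm
    have h2 : ⁅x, y⁆ ^ m = 1 := by rw [← commutator_pow_left' x y hc m, h1]
    have h3 : ⁅x, y⁆ = 1 := hZ _ (hcomm y) m hm h2
    exact (commutatorElement_eq_one_iff_commute.mp h3).symm.eq
  exact (QuotientGroup.eq_one_iff _).mpr hxcen

end TF


lemma tf_of_center_tf : ∀ (c : ℕ) (G : Type u) [Group G] [Group.IsNilpotent G],
    Group.nilpotencyClass G ≤ c →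
    (∀ x ∈ center G, ∀ m : ℕ, 0 < m → x ^ m = 1 → x = 1) →
    ∀ x : G, ∀ m : ℕ, 0 < m → x ^ m = 1 → x = 1 := by
  intro c
  induction c with
  | zero =>
    intro G _ _ hle _ x m hm hx
    have : Subsingleton G := nilpotencyClass_zero_iff_subsingleton.mp (Nat.le_zero.mp hle)
    exact Subsingleton.elim x 1
  | succ c ih =>
    intro G _ _ hle hZ x m hm hx
    haveI : Group.IsNilpotent (G ⧸ center G) :=
      nilpotent_of_surjective (QuotientGroup.mk' (center G)) QuotientGroup.mk_surjective
    have hleQ : Group.nilpotencyClass (G ⧸ center G) ≤ c := by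
      rw [nilpotencyClass_quotient_center]; omega
    have hx1 : ((x : G ⧸ center G)) = 1 := by
      refine ih (G ⧸ center G) hleQ (center_tf_quotient hZ) _ m hm ?_
      rw [← QuotientGroup.mk_pow, hx]
      rfl
    exact hZ x ((QuotientGroup.eq_one_iff _).mp hx1) m hm hx

lemma tf_quotient_center (G : Type u) [Group G] [Group.IsNilpotent G]
    (htf : ∀ x : G, ∀ m : ℕ, 0 < m → x ^ m = 1 → x = 1) :
    ∀ x : G ⧸ center G, ∀ m : ℕ, 0 < m → x ^ m = 1 → x = 1 := by
  haveI : Group.IsNilpotent (G ⧸ center G) :=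
    nilpotent_of_surjective (QuotientGroup.mk' (center G)) QuotientGroup.mk_surjective
  exact tf_of_center_tf (Group.nilpotencyClass (G ⧸ center G)) _ le_rfl
    (center_tf_quotient (fun x _ => htf x))

lemma unique_roots : ∀ (c : ℕ) (G : Type u) [Group G] [Group.IsNilpotent G],
    Group.nilpotencyClass G ≤ c →
    (∀ x : G, ∀ m : ℕ, 0 < m → x ^ m = 1 → x = 1) →
    ∀ x y : G, ∀ m : ℕ, 0 < m → x ^ m = y ^ m → x = y := by
  intro c
  induction c with
  | zero =>
    intro G _ _ hle _ x y m hm h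
    have : Subsingleton G := nilpotencyClass_zero_iff_subsingleton.mp (Nat.le_zero.mp hle)
    exact Subsingleton.elim x y
  | succ c ih =>
    intro G _ _ hle htf x y m hm h
    haveI : Group.IsNilpotent (G ⧸ center G) :=
      nilpotent_of_surjective (QuotientGroup.mk' (center G)) QuotientGroup.mk_surjective
    have hleQ : Group.nilpotencyClass (G ⧸ center G) ≤ c := by
      rw [nilpotencyClass_quotient_center]; omega
    have hQ : ((x : G ⧸ center G)) = (y : G ⧸ center G) := by
      refine ih (G ⧸ center G) hleQ (tf_quotient_center G htf) _ _ m hm ?_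
      rw [← QuotientGroup.mk_pow, ← QuotientGroup.mk_pow, h]
    have hz : x⁻¹ * y ∈ center G := QuotientGroup.eq.mp hQ
    have hy : y = x * (x⁻¹ * y) := (mul_inv_cancel_left x y).symm
    have hcomm : Commute x (x⁻¹ * y) := Subgroup.mem_center_iff.mp hz x
    have hym : y ^ m = x ^ m * (x⁻¹ * y) ^ m := by
      conv_lhs => rw [hy]
      exact hcomm.mul_pow m
    have hzm : (x⁻¹ * y) ^ m = 1 := by
      have : x ^ m * (x⁻¹ * y) ^ m = x ^ m * 1 := by rw [mul_one, ← hym, h]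
      exact mul_left_cancel this
    have : x⁻¹ * y = 1 := htf _ m hm hzm
    rw [hy, this, mul_one]

open Subgroup

lemma lcs_succ_eq' {G : Type*} [Group G] (n : ℕ) :
    Subgroup.lowerCentralSeries (⊤ : Subgroup G) (n+1) = ⁅Subgroup.lowerCentralSeries (⊤ : Subgroup G) n, ⊤⁆ := rfl

lemma map_lcs_eq' {G H : Type*} [Group G] [Group H] (f : G →* H) (hf : Function.Surjective f)
    (n : ℕ) : Subgroup.map f (Subgroup.lowerCentralSeries (⊤ : Subgroup G) n) = Subgroup.lowerCentralSeries (⊤ : Subgroup H) n := by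
  induction n with
  | zero =>
    simp only [Subgroup.lowerCentralSeries_zero]
    exact Subgroup.map_top_of_surjective f hf
  | succ n ih =>
    rw [lcs_succ_eq', lcs_succ_eq', Subgroup.map_commutator, ih,
      Subgroup.map_top_of_surjective f hf]


lemma torsion_mul : ∀ (c : ℕ) (G : Type u) [Group G], Subgroup.lowerCentralSeries (⊤ : Subgroup G) c = ⊥ →
    ∀ (x y : G) (a b : ℕ), 0 < a → 0 < b → x ^ a = 1 → y ^ b = 1 →
    ∃ e : ℕ, 0 < e ∧ (x * y) ^ e = 1 := by
  intro c
  induction c with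
  | zero =>
    intro G _ hc x y a b _ _ _ _
    refine ⟨1, one_pos, ?_⟩
    have : x * y ∈ (⊥ : Subgroup G) := hc ▸ Subgroup.mem_top _
    simpa using this
  | succ c ih =>
    intro G _ hc x y a b ha hb hx hy
    set H := Subgroup.closure ({x, y} : Set G) with hHdef
    have hxH : x ∈ H := Subgroup.subset_closure (by simp)
    have hyH : y ∈ H := Subgroup.subset_closure (by simp)
    set X : H := ⟨x, hxH⟩ with hXdef
    set Y : H := ⟨y, hyH⟩ with hYdef
    have hXa : X ^ a = 1 := by
      apply Subtype.ext; rw [SubmonoidClass.coe_pow]; exact hx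
    have hYb : Y ^ b = 1 := by
      apply Subtype.ext; rw [SubmonoidClass.coe_pow]; exact hy
    have hHc1 : Subgroup.lowerCentralSeries (⊤ : Subgroup H) (c+1) = ⊥ := by
      have h1 := Subgroup.lowerCentralSeries_map_subtype_le H (c+1)
      rw [hc, le_bot_iff, Subgroup.map_eq_bot_iff, Subgroup.ker_subtype, le_bot_iff] at h1
      exact h1
    suffices hs : ∃ e : ℕ, 0 < e ∧ (X * Y) ^ e = 1 by
      obtain ⟨e, he, hXY⟩ := hs
      refine ⟨e, he, ?_⟩
      have := congrArg (Subtype.val) hXY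
      rw [SubmonoidClass.coe_pow] at this
      exact this
    match c, hHc1, ih with
    | 0, hHc1, ih =>
      have hcomm : Commute X Y := by
        have h2 : ⁅X, Y⁆ ∈ Subgroup.lowerCentralSeries (⊤ : Subgroup H) 1 := by
          rw [lcs_succ_eq']
          exact Subgroup.commutator_mem_commutator (Subgroup.mem_top _) (Subgroup.mem_top _)
        rw [hHc1] at h2
        exact commutatorElement_eq_one_iff_commute.mp (Subgroup.mem_bot.mp h2)
      refine ⟨a * b, Nat.mul_pos ha hb, ?_⟩
      rw [hcomm.mul_pow, pow_mul, hXa, one_pow, one_mul, mul_comm a b, pow_mul, hYb, one_pow]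
    | (c'+1), hHc1, ih =>
      set N := Subgroup.lowerCentralSeries (⊤ : Subgroup H) (c'+1) with hNdef
      have hQbot : Subgroup.lowerCentralSeries (⊤ : Subgroup (H ⧸ N)) (c'+1) = ⊥ := by
        rw [← map_lcs_eq' (QuotientGroup.mk' N) QuotientGroup.mk_surjective,
          Subgroup.map_eq_bot_iff, QuotientGroup.ker_mk']
      obtain ⟨e, he, hequot⟩ := ih (H ⧸ N) hQbot (X : H ⧸ N) (Y : H ⧸ N) a b ha hb
        (by rw [← QuotientGroup.mk_pow, hXa]; rfl)
        (by rw [← QuotientGroup.mk_pow, hYb]; rfl)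
      have hw : (X * Y) ^ e ∈ N := by
        rw [← QuotientGroup.eq_one_iff, QuotientGroup.mk_pow, QuotientGroup.mk_mul]
        exact hequot
      have hcen : ∀ t ∈ N, ∀ h : H, Commute t h := by
        intro t ht h
        have h2 : ⁅t, h⁆ ∈ Subgroup.lowerCentralSeries (⊤ : Subgroup H) (c'+2) := by
          rw [lcs_succ_eq']
          exact Subgroup.commutator_mem_commutator ht (Subgroup.mem_top _)
        rw [hHc1] at h2
        exact commutatorElement_eq_one_iff_commute.mp (Subgroup.mem_bot.mp h2)
      have memc : ∀ p ∈ Subgroup.lowerCentralSeries (⊤ : Subgroup H) c', ∀ q : H, ⁅p, q⁆ ∈ N := by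
        intro p hp q
        rw [hNdef, lcs_succ_eq']
        exact Subgroup.commutator_mem_commutator hp (Subgroup.mem_top _)
      have hhom : ∀ p ∈ Subgroup.lowerCentralSeries (⊤ : Subgroup H) c', ∀ q₁ q₂ : H,
          ⁅p, q₁ * q₂⁆ = ⁅p, q₁⁆ * ⁅p, q₂⁆ := by
        intro p hp q₁ q₂
        have key : ⁅p, q₁ * q₂⁆ = ⁅p, q₁⁆ * (q₁ * ⁅p, q₂⁆ * q₁⁻¹) := by
          simp only [commutatorElement_def]
          group
        rw [key]
        congr 1
        have h3 : Commute ⁅p, q₂⁆ q₁ := hcen _ (memc p hp q₂) q₁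
        rw [← h3.eq, mul_inv_cancel_right]
      have hpowq : ∀ p ∈ Subgroup.lowerCentralSeries (⊤ : Subgroup H) c', ∀ q : H, ∀ n : ℕ,
          ⁅p, q ^ n⁆ = ⁅p, q⁆ ^ n := by
        intro p hp q n
        induction n with
        | zero => simp
        | succ n ihn => rw [pow_succ, hhom p hp, ihn, pow_succ]
      have hgen : ∀ p ∈ Subgroup.lowerCentralSeries (⊤ : Subgroup H) c',
          ∀ (g : G) (hg : g ∈ Subgroup.closure ({x, y} : Set G)),
          ⁅p, (⟨g, hg⟩ : H)⁆ ^ (a * b) = 1 := by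
        intro p hp g hg
        induction hg using Subgroup.closure_induction with
        | mem g hgm =>
          rcases hgm with hgm | hgm
          · subst hgm
            show ⁅p, X⁆ ^ (a * b) = 1
            rw [pow_mul, ← hpowq p hp X a, hXa, commutatorElement_one_right, one_pow]
          · rw [Set.mem_singleton_iff] at hgm
            subst hgm
            show ⁅p, Y⁆ ^ (a * b) = 1
            rw [mul_comm a b, pow_mul, ← hpowq p hp Y b, hYb, commutatorElement_one_right,
              one_pow]
        | one =>
          show ⁅p, (1 : H)⁆ ^ (a * b) = 1
          rw [commutatorElement_one_right, one_pow]
        | mul g₁ g₂ hg₁ hg₂ ih₁ ih₂ =>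
          show ⁅p, (⟨g₁, hg₁⟩ : H) * (⟨g₂, hg₂⟩ : H)⁆ ^ (a * b) = 1
          rw [hhom p hp]
          have hcom : Commute ⁅p, (⟨g₁, hg₁⟩ : H)⁆ ⁅p, (⟨g₂, hg₂⟩ : H)⁆ :=
            hcen _ (memc p hp _) _
          rw [hcom.mul_pow, ih₁, ih₂, one_mul]
        | inv g hg ihg =>
          show ⁅p, (⟨g, hg⟩ : H)⁻¹⁆ ^ (a * b) = 1
          have h4 : ⁅p, (⟨g, hg⟩ : H)⁆ * ⁅p, (⟨g, hg⟩ : H)⁻¹⁆ = 1 := by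
            rw [← hhom p hp, mul_inv_cancel, commutatorElement_one_right]
          have h5 : ⁅p, ((⟨g, hg⟩ : H))⁻¹⁆ = ⁅p, (⟨g, hg⟩ : H)⁆⁻¹ :=
            (inv_eq_of_mul_eq_one_right h4).symm
          rw [h5, inv_pow, ihg, inv_one]
      have hgen' : ∀ p ∈ Subgroup.lowerCentralSeries (⊤ : Subgroup H) c', ∀ q : H, ⁅p, q⁆ ^ (a * b) = 1 := by
        intro p hp q
        have := hgen p hp q.1 q.2
        simpa using this
      have hpow : ∀ t ∈ N, t ^ (a * b) = 1 := by
        intro t ht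
        rw [hNdef, lcs_succ_eq', Subgroup.commutator_def] at ht
        induction ht using Subgroup.closure_induction with
        | mem g hgm =>
          obtain ⟨g₁, hg₁, g₂, -, rfl⟩ := hgm
          exact hgen' g₁ hg₁ g₂
        | one => rw [one_pow]
        | mul g₁ g₂ hg₁ hg₂ ih₁ ih₂ =>
          have hg₁' : g₁ ∈ N := by
            rw [hNdef, lcs_succ_eq', Subgroup.commutator_def]; exact hg₁
          have hcom : Commute g₁ g₂ := hcen _ hg₁' g₂
          rw [hcom.mul_pow, ih₁, ih₂, one_mul]
        | inv g hg ihg => rw [inv_pow, ihg, inv_one]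
      refine ⟨e * (a * b), by positivity, ?_⟩
      rw [pow_mul]
      exact hpow _ hw

open Subgroup

section QuotientPlumbing
variable {G : Type*} [Group G]

lemma mem_of_mk_eq {N : Subgroup G} [N.Normal] {u v : G}
    (h : (u : G ⧸ N) = (v : G ⧸ N)) : u * v⁻¹ ∈ N := by
  have h2 : v⁻¹ * u ∈ N := QuotientGroup.eq.mp h.symm
  have h3 := Subgroup.Normal.conj_mem ‹N.Normal› _ h2 v
  rwa [mul_inv_cancel_left] at h3

lemma mk_eq_of_mem {N : Subgroup G} [N.Normal] {u v : G}
    (h : u * v⁻¹ ∈ N) : (u : G ⧸ N) = (v : G ⧸ N) := by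
  rw [QuotientGroup.eq]
  have h2 : v * u⁻¹ ∈ N := by
    have := N.inv_mem h
    rwa [mul_inv_rev, inv_inv] at this
  have h3 := Subgroup.Normal.conj_mem ‹N.Normal› _ h2 u⁻¹
  simpa [mul_assoc] using h3

lemma comm_central_left {U A z : G} (hU : ∀ w : G, U * w = w * U) :
    ⁅U * A, z⁆ = ⁅A, z⁆ := by
  have h1 : ⁅U * A, z⁆ = U * (A * z * A⁻¹) * U⁻¹ * z⁻¹ := by
    simp only [commutatorElement_def]
    group
  rw [h1, hU (A * z * A⁻¹), mul_inv_cancel_right, commutatorElement_def]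

lemma comm_central_right {A V B : G} (hAV : A * V = V * A)
    (hC : ∀ w : G, ⁅A, B⁆ * w = w * ⁅A, B⁆) : ⁅A, V * B⁆ = ⁅A, B⁆ := by
  have h1 : ⁅A, V * B⁆ = (A * V) * (B * A⁻¹ * B⁻¹) * V⁻¹ := by
    simp only [commutatorElement_def]
    group
  rw [h1, hAV]
  have h2 : V * A * (B * A⁻¹ * B⁻¹) * V⁻¹ = V * ⁅A, B⁆ * V⁻¹ := by
    simp only [commutatorElement_def]
    group
  rw [h2, ← hC V, mul_inv_cancel_right]

end QuotientPlumbing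

section TSeries
variable (G : Type*) [Group G]

/-- The isolator of the lower central series: elements with a positive power
in `lowerCentralSeries G k`. -/
def Tsub (k : ℕ) : Subgroup G where
  carrier := {x | ∃ m : ℕ, 0 < m ∧ x ^ m ∈ Subgroup.lowerCentralSeries (⊤ : Subgroup G) k}
  one_mem' := ⟨1, one_pos, by simpa using Subgroup.one_mem _⟩
  inv_mem' := by
    rintro x ⟨m, hm, hx⟩
    exact ⟨m, hm, by rw [inv_pow]; exact inv_mem hx⟩
  mul_mem' := by
    rintro x y ⟨ma, hma, hxa⟩ ⟨mb, hmb, hyb⟩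
    have hQ : Subgroup.lowerCentralSeries (⊤ : Subgroup (G ⧸ Subgroup.lowerCentralSeries (⊤ : Subgroup G) k)) k = ⊥ := by
      rw [← map_lcs_eq' (QuotientGroup.mk' _) QuotientGroup.mk_surjective,
        Subgroup.map_eq_bot_iff, QuotientGroup.ker_mk']
    obtain ⟨e, he, hxy⟩ := torsion_mul k (G ⧸ Subgroup.lowerCentralSeries (⊤ : Subgroup G) k) hQ
      (x : G ⧸ Subgroup.lowerCentralSeries (⊤ : Subgroup G) k) (y : G ⧸ Subgroup.lowerCentralSeries (⊤ : Subgroup G) k) ma mb hma hmb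
      (by rw [← QuotientGroup.mk_pow]; exact (QuotientGroup.eq_one_iff _).mpr hxa)
      (by rw [← QuotientGroup.mk_pow]; exact (QuotientGroup.eq_one_iff _).mpr hyb)
    refine ⟨e, he, ?_⟩
    have h1 : (((x * y) ^ e : G) : G ⧸ Subgroup.lowerCentralSeries (⊤ : Subgroup G) k) = 1 := by
      rw [QuotientGroup.mk_pow, QuotientGroup.mk_mul]
      exact hxy
    exact (QuotientGroup.eq_one_iff _).mp h1

variable {G}

instance Tsub_normal (k : ℕ) : (Tsub G k).Normal := by
  constructor
  rintro x ⟨m, hm, hx⟩ g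
  exact ⟨m, hm, by rw [conj_pow]; exact (Subgroup.lowerCentralSeries_normal ⊤ k).conj_mem _ hx g⟩

lemma lcs_le_Tsub (k : ℕ) : Subgroup.lowerCentralSeries (⊤ : Subgroup G) k ≤ Tsub G k :=
  fun x hx => ⟨1, one_pos, by rwa [pow_one]⟩

lemma Tsub_succ_le (k : ℕ) : Tsub G (k + 1) ≤ Tsub G k := by
  rintro x ⟨m, hm, hx⟩
  exact ⟨m, hm, Subgroup.lowerCentralSeries_antitone (S := ⊤) (Nat.le_succ k) hx⟩

lemma pow_mem_Tsub {k : ℕ} {x : G} {m : ℕ} (hm : 0 < m) (h : x ^ m ∈ Tsub G k) :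
    x ∈ Tsub G k := by
  obtain ⟨m', hm', h'⟩ := h
  exact ⟨m * m', Nat.mul_pos hm hm', by rwa [pow_mul]⟩

lemma Tsub_tf (k : ℕ) : ∀ q : G ⧸ Tsub G k, ∀ m : ℕ, 0 < m → q ^ m = 1 → q = 1 := by
  intro q m hm hq
  obtain ⟨x, rfl⟩ := QuotientGroup.mk_surjective q
  rw [← QuotientGroup.mk_pow, QuotientGroup.eq_one_iff] at hq
  rw [QuotientGroup.eq_one_iff]
  exact pow_mem_Tsub hm hq

lemma Tsub_quot_nil (k : ℕ) : Subgroup.lowerCentralSeries (⊤ : Subgroup (G ⧸ Tsub G k)) k = ⊥ := by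
  rw [← map_lcs_eq' (QuotientGroup.mk' _) QuotientGroup.mk_surjective,
    Subgroup.map_eq_bot_iff, QuotientGroup.ker_mk']
  exact lcs_le_Tsub k

lemma Tsub_quot_nilpotent (k : ℕ) : Group.IsNilpotent (G ⧸ Tsub G k) :=
  Subgroup.nilpotent_iff_lowerCentralSeries.mpr ⟨k, Tsub_quot_nil k⟩

end TSeries

section Unipotent
variable {G : Type*} [Group G]

lemma unipotent_step (ψ : MulAut G) (hab : ∀ g : G, ψ g * g⁻¹ ∈ commutator G) :
    ∀ k : ℕ, ∀ y ∈ Subgroup.lowerCentralSeries (⊤ : Subgroup G) k, ψ y * y⁻¹ ∈ Subgroup.lowerCentralSeries (⊤ : Subgroup G) (k + 1) := by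
  intro k
  induction k with
  | zero =>
    intro y _
    rw [Subgroup.top_lowerCentralSeries_one]
    exact hab y
  | succ k ihk =>
    set N := Subgroup.lowerCentralSeries (⊤ : Subgroup G) (k + 2) with hNdef
    set m : G →* G ⧸ N := QuotientGroup.mk' N with hmdef
    -- centrality of the image of lcs (k+1)
    have hbot : Subgroup.lowerCentralSeries (⊤ : Subgroup (G ⧸ N)) (k + 2) = ⊥ := by
      rw [← map_lcs_eq' m QuotientGroup.mk_surjective, Subgroup.map_eq_bot_iff,
        hmdef, QuotientGroup.ker_mk']
    have hcent : ∀ w ∈ Subgroup.lowerCentralSeries (⊤ : Subgroup G) (k + 1), ∀ z : G ⧸ N, m w * z = z * m w := by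
      intro w hw z
      have h1 : m w ∈ Subgroup.lowerCentralSeries (⊤ : Subgroup (G ⧸ N)) (k + 1) :=
        Subgroup.lowerCentralSeries.map m (k + 1) (Subgroup.mem_map_of_mem m hw)
      have h2 : ⁅m w, z⁆ ∈ Subgroup.lowerCentralSeries (⊤ : Subgroup (G ⧸ N)) (k + 2) := by
        rw [lcs_succ_eq']
        exact Subgroup.commutator_mem_commutator h1 (Subgroup.mem_top _)
      rw [hbot] at h2
      exact (commutatorElement_eq_one_iff_commute.mp (Subgroup.mem_bot.mp h2)).eq
    -- the "equalizer" subgroup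
    let S : Subgroup G := {
      carrier := {z | m (ψ z) = m z}
      one_mem' := by simp
      inv_mem' := by
        intro z hz
        simp only [Set.mem_setOf_eq, map_inv] at *
        rw [hz]
      mul_mem' := by
        intro z w hz hw
        simp only [Set.mem_setOf_eq, map_mul] at *
        rw [hz, hw] }
    have hgoal : Subgroup.lowerCentralSeries (⊤ : Subgroup G) (k + 1) ≤ S := by
      rw [lcs_succ_eq']
      rw [Subgroup.commutator_le]
      intro a ha b _
      show m (ψ ⁅a, b⁆) = m ⁅a, b⁆
      have hψcomm : ψ ⁅a, b⁆ = ⁅ψ a, ψ b⁆ := by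
        simp [commutatorElement_def, map_mul, map_inv]
      rw [hψcomm, map_commutatorElement, map_commutatorElement]
      -- decompose
      have hu : ψ a * a⁻¹ ∈ Subgroup.lowerCentralSeries (⊤ : Subgroup G) (k + 1) := ihk a ha
      have hv : ψ b * b⁻¹ ∈ Subgroup.lowerCentralSeries (⊤ : Subgroup G) 1 := by
        rw [Subgroup.top_lowerCentralSeries_one]; exact hab b
      have hA : m (ψ a) = m (ψ a * a⁻¹) * m a := by rw [← map_mul, inv_mul_cancel_right]
      have hB : m (ψ b) = m (ψ b * b⁻¹) * m b := by rw [← map_mul, inv_mul_cancel_right]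
      rw [hA, hB]
      -- step 1: strip the central factor on the left
      rw [comm_central_left (hcent _ hu)]
      -- step 2: strip the commuting factor on the right
      have hav : ⁅a, ψ b * b⁻¹⁆ ∈ Subgroup.lowerCentralSeries (⊤ : Subgroup G) (k + 2) := by
        have := lcs_comm 1 k (G := G)
        exact this (Subgroup.commutator_mem_commutator ha hv)
      have hAV : m a * m (ψ b * b⁻¹) = m (ψ b * b⁻¹) * m a := by
        have h3 : ⁅m a, m (ψ b * b⁻¹)⁆ = 1 := by
          rw [← map_commutatorElement]
          exact (QuotientGroup.eq_one_iff _).mpr hav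
        exact (commutatorElement_eq_one_iff_commute.mp h3).eq
      have hABmem : ⁅a, b⁆ ∈ Subgroup.lowerCentralSeries (⊤ : Subgroup G) (k + 1) := by
        rw [lcs_succ_eq']
        exact Subgroup.commutator_mem_commutator ha (Subgroup.mem_top _)
      have hC : ∀ w : G ⧸ N, ⁅m a, m b⁆ * w = w * ⁅m a, m b⁆ := by
        intro w
        rw [← map_commutatorElement]
        exact hcent _ hABmem w
      rw [comm_central_right hAV hC]
    intro y hy
    have h4 : m (ψ y) = m y := hgoal hy
    exact mem_of_mk_eq h4

end Unipotent

/-- A nontrivial automorphism of a residually torsion-free nilpotent group that acts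
trivially on the abelianization has infinite order. -/
theorem stmt_1 {G : Type*} [Group G]
    (hres : ∀ g : G, g ≠ 1 → ∃ (N : Type) (_ : Group N) (π : G →* N),
      Function.Surjective π ∧ Group.IsNilpotent N ∧ Monoid.IsTorsionFree N ∧ π g ≠ 1)
    (ψ : MulAut G) (hψ : ψ ≠ 1)
    (hab : ∀ g : G, ψ g * g⁻¹ ∈ commutator G) :
    ¬ IsOfFinOrder ψ := by
  intro hfin
  set n := orderOf ψ with hn
  have hnpos : 0 < n := hfin.orderOf_pos
  have hψn : ψ ^ n = 1 := pow_orderOf_eq_one ψ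
  obtain ⟨g₀, hg₀⟩ : ∃ g : G, ψ g ≠ g := by
    by_contra h
    push_neg at h
    exact hψ (by ext g; simp [h g])
  set c₀ := ψ g₀ * g₀⁻¹ with hc₀def
  have hc₀ : c₀ ≠ 1 := by
    intro h
    exact hg₀ (by rwa [hc₀def, mul_inv_eq_one] at h)
  -- the main inductive claim
  have main : ∀ k : ℕ, ∀ g : G, ψ g * g⁻¹ ∈ Tsub G k := by
    intro k
    induction k with
    | zero =>
      intro g
      exact ⟨1, one_pos, by rw [pow_one]; exact Subgroup.mem_top _⟩
    | succ k ihk =>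
      haveI : Group.IsNilpotent (G ⧸ Tsub G (k+1)) := Tsub_quot_nilpotent (k+1)
      -- step: ψ moves elements of Tsub k by elements of Tsub (k+1)
      have hsub : ∀ x : G, x ∈ Tsub G k → ψ x * x⁻¹ ∈ Tsub G (k+1) := by
        rintro x ⟨m, hm, hxm⟩
        have h1 : ψ (x ^ m) * (x ^ m)⁻¹ ∈ Subgroup.lowerCentralSeries (⊤ : Subgroup G) (k+1) :=
          unipotent_step ψ hab k _ hxm
        have h2 : ψ (x ^ m) * (x ^ m)⁻¹ ∈ Tsub G (k+1) := lcs_le_Tsub (k+1) h1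
        have h3 : ((ψ (x ^ m) : G) : G ⧸ Tsub G (k+1)) = ((x ^ m : G) : G ⧸ Tsub G (k+1)) :=
          mk_eq_of_mem h2
        have h4 : ((ψ x : G) : G ⧸ Tsub G (k+1)) ^ m = ((x : G) : G ⧸ Tsub G (k+1)) ^ m := by
          rw [← QuotientGroup.mk_pow, ← QuotientGroup.mk_pow, ← map_pow]
          exact h3
        have h5 : ((ψ x : G) : G ⧸ Tsub G (k+1)) = ((x : G) : G ⧸ Tsub G (k+1)) :=
          unique_roots (Group.nilpotencyClass (G ⧸ Tsub G (k+1))) _ le_rfl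
            (Tsub_tf (k+1)) _ _ m hm h4
        exact mem_of_mk_eq h5
      intro g
      have hc : ψ g * g⁻¹ ∈ Tsub G k := ihk g
      set cg := ψ g * g⁻¹ with hcgdef
      set K := Tsub G (k+1) with hKdef
      have hinv : K ≤ K.comap ψ.toMonoidHom := by
        rintro x ⟨m, hm, hx⟩
        refine ⟨m, hm, ?_⟩
        show (ψ x) ^ m ∈ Subgroup.lowerCentralSeries (⊤ : Subgroup G) (k+1)
        rw [← map_pow]
        exact Subgroup.lowerCentralSeries.map ψ.toMonoidHom (k+1) (Subgroup.mem_map_of_mem _ hx)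
      set Φ : G ⧸ K →* G ⧸ K := QuotientGroup.map K K ψ.toMonoidHom hinv with hΦdef
      have hΦmk : ∀ z : G, Φ (z : G ⧸ K) = ((ψ z : G) : G ⧸ K) := fun z =>
        QuotientGroup.map_mk K K ψ.toMonoidHom hinv z
      have hΦc : Φ (cg : G ⧸ K) = (cg : G ⧸ K) := by
        rw [hΦmk]
        exact mk_eq_of_mem (hsub cg hc)
      have hψg : ((ψ g : G) : G ⧸ K) = ((cg : G) : G ⧸ K) * ((g : G) : G ⧸ K) := by
        have h0 : ψ g = cg * g := by rw [hcgdef, inv_mul_cancel_right]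
        rw [h0, QuotientGroup.mk_mul]
      have hΦg : Φ ((g : G) : G ⧸ K) = ((cg : G) : G ⧸ K) * ((g : G) : G ⧸ K) := by
        rw [hΦmk g]; exact hψg
      have hB : ∀ j : ℕ, Φ^[j] ((g : G) : G ⧸ K) =
          (((cg : G)) : G ⧸ K) ^ j * ((g : G) : G ⧸ K) := by
        intro j
        induction j with
        | zero => simp
        | succ j ihj =>
          rw [Function.iterate_succ_apply', ihj, map_mul, map_pow, hΦc, hΦg, ← mul_assoc,
            ← pow_succ]
      have hA : ∀ j : ℕ, (((ψ ^ j : MulAut G) g : G) : G ⧸ K) = Φ^[j] ((g : G) : G ⧸ K) := by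
        intro j
        induction j with
        | zero => simp
        | succ j ihj =>
          have hstep : (ψ ^ (j+1) : MulAut G) g = ψ ((ψ ^ j : MulAut G) g) := by
            rw [pow_succ']; rfl
          rw [hstep, ← hΦmk, ihj, Function.iterate_succ_apply']
      have hn' := (hA n).trans (hB n)
      rw [hψn] at hn'
      have h6 : (((cg : G)) : G ⧸ K) ^ n = 1 := by
        have h7 : (((cg : G)) : G ⧸ K) ^ n * ((g : G) : G ⧸ K) = ((g : G) : G ⧸ K) := by
          rw [← hn']
          simp
        exact mul_eq_right.mp h7
      have h8 : ((cg : G ⧸ K)) = 1 := Tsub_tf (k+1) _ n hnpos h6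
      exact (QuotientGroup.eq_one_iff _).mp h8
  -- derive the contradiction
  obtain ⟨N, _, π, hsur, hnil, htf, hπ⟩ := hres c₀ hc₀
  obtain ⟨c, hc⟩ := Subgroup.nilpotent_iff_lowerCentralSeries.mp hnil
  obtain ⟨m, hm, hmem⟩ := main c g₀
  have h9 : π c₀ ^ m = 1 := by
    have h10 : π (c₀ ^ m) ∈ Subgroup.lowerCentralSeries (⊤ : Subgroup N) c :=
      Subgroup.lowerCentralSeries.map π c (Subgroup.mem_map_of_mem π hmem)
    rw [hc] at h10
    rw [← map_pow]
    exact Subgroup.mem_bot.mp h10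
  have h11 : π c₀ = 1 := by
    by_contra hne
    exact htf _ hne (isOfFinOrder_iff_pow_eq_one.mpr ⟨m, hm, h9⟩)
  exact hπ h11
end

section
/- Let F_n (n ≥ 3) be free on x_1, …, x_n and let ψ be the partial conjugation x_1 ↦ x_1, x_2 ↦ x_1 x_2 x_1^{-1}, x_j ↦ x_j for j ≥ 3. Then there is a finite index normal subgroup H of F_n with F_n/H abelian such that ψ(H) = H and the automorphism induced by ψ on the abelianization H/[H,H] has infinite order. -/
namespace Stmt15Aux

open SemidirectProduct Multiplicative
open scoped commutatorElement

abbrev Qa := ZMod 2 × ZMod 2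
abbrev Ra := AddMonoidAlgebra ℤ Qa

noncomputable def φQ : Multiplicative Qa →* MulAut (Multiplicative Ra) :=
  MonoidHom.mk'
    (fun q => AddEquiv.toMultiplicative
      (DistribMulAction.toAddAut Raˣ Ra ((AddMonoidAlgebra.of ℤ Qa).toHomUnits q)))
    (by
      intro a b
      ext r
      show Multiplicative.ofAdd _ = Multiplicative.ofAdd _
      simp [AddMonoidAlgebra.of_apply, AddMonoidAlgebra.single_mul_single, mul_smul])

lemma φQ_apply (q : Multiplicative Qa) (x : Multiplicative Ra) :
    φQ q x = ofAdd (AddMonoidAlgebra.single q.toAdd 1 * x.toAdd) := rfl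

noncomputable abbrev Gg : Type := Multiplicative Ra ⋊[φQ] Multiplicative Qa

noncomputable def chQ : Multiplicative Qa →* ℤ where
  toFun q := (-1 : ℤ) ^ (q.toAdd.1.val + q.toAdd.2.val)
  map_one' := rfl
  map_mul' a b := by
    have h1 : ∀ x y : ZMod 2, ((-1 : ℤ)) ^ ((x + y).val) = (-1) ^ x.val * (-1) ^ y.val := by
      decide
    show (-1 : ℤ) ^ ((a.toAdd.1 + b.toAdd.1).val + (a.toAdd.2 + b.toAdd.2).val) = _
    rw [pow_add, h1, h1]
    show _ = (-1 : ℤ) ^ (_ + _) * (-1 : ℤ) ^ (_ + _)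
    rw [pow_add, pow_add]
    ring

noncomputable def Echar : Ra →ₐ[ℤ] ℤ := AddMonoidAlgebra.lift ℤ ℤ Qa chQ

lemma key (k : ℕ)
    (h : ((⁅(inl (ofAdd ((k : ℤ) : Ra)) : Gg) * inr (ofAdd ((1,0) : Qa)) *
      (inl (ofAdd ((k : ℤ) : Ra)))⁻¹, inr (ofAdd ((0,1) : Qa))⁆ : Gg)).left = 1) : k = 0 := by
  simp only [commutatorElement_def, mul_left, inv_left, left_inl, right_inl, left_inr,
    right_inr, mul_right, inv_right, map_one, map_mul, map_inv, one_mul, mul_one,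
    inv_one, MulAut.mul_apply, MulAut.one_apply, φQ_apply, toAdd_ofAdd, toAdd_one,
    toAdd_mul, toAdd_inv, ← ofAdd_add, ← ofAdd_neg] at h
  have h0 := ofAdd_eq_one.mp h
  have h1 := congrArg Echar h0
  simp only [map_add, map_mul, map_neg, map_intCast, map_zero,
    Echar, AddMonoidAlgebra.lift_single] at h1
  have c1 : chQ (Multiplicative.ofAdd ((1,0) : Qa)) = -1 := by decide
  have c2 : chQ (Multiplicative.ofAdd (((1,0) : Qa) + ((0,1) : Qa))) = 1 := by decide
  have c3 : chQ (Multiplicative.ofAdd (-((1,0) : Qa))) = -1 := by decide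
  rw [c1, c2, c3] at h1
  simp only [smul_eq_mul, one_mul, mul_one, Int.cast_id] at h1
  omega

noncomputable def gens (n : ℕ) : Fin n → Gg := fun i =>
  if i.val = 0 then inl (ofAdd (1 : Ra))
  else if i.val = 1 then inr (ofAdd ((1,0) : Qa))
  else if i.val = 2 then inr (ofAdd ((0,1) : Qa))
  else 1

noncomputable def ρf (n : ℕ) : FreeGroup (Fin n) →* Gg := FreeGroup.lift (gens n)

end Stmt15Aux

open FreeGroup in
open scoped commutatorElement in
/-- For n ≥ 3, the partial conjugation x₁ ↦ x₁, x₂ ↦ x₁x₂x₁⁻¹, x_j ↦ x_j (j ≥ 3) of Fₙ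
preserves a finite-index normal subgroup H with abelian quotient, on whose abelianization
it induces an automorphism of infinite order. -/
theorem stmt_15 (n : ℕ) (hn : 3 ≤ n) (ψ : MulAut (FreeGroup (Fin n)))
    (hψ : ∀ i : Fin n, ψ (of i) =
      if i = (⟨1, by omega⟩ : Fin n) then
        of (⟨0, by omega⟩ : Fin n) * of (⟨1, by omega⟩ : Fin n) * (of (⟨0, by omega⟩ : Fin n))⁻¹
      else of i) :
    ∃ H : Subgroup (FreeGroup (Fin n)), H.Normal ∧ H.FiniteIndex ∧
      (∀ a b : FreeGroup (Fin n), ⁅a, b⁆ ∈ H) ∧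
      (∀ x : FreeGroup (Fin n), x ∈ H ↔ ψ x ∈ H) ∧
      ∀ φ : Abelianization H ≃* Abelianization H,
        (∀ x y : H, ψ (x : FreeGroup (Fin n)) = (y : FreeGroup (Fin n)) →
          φ (Abelianization.of x) = Abelianization.of y) →
        ¬ IsOfFinOrder φ := by
  classical
  set i0 : Fin n := ⟨0, by omega⟩ with hi0
  set i1 : Fin n := ⟨1, by omega⟩ with hi1
  set i2 : Fin n := ⟨2, by omega⟩ with hi2
  set ρ : FreeGroup (Fin n) →* Stmt15Aux.Gg := Stmt15Aux.ρf n with hρ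
  set qh : FreeGroup (Fin n) →* Multiplicative Stmt15Aux.Qa :=
    SemidirectProduct.rightHom.comp ρ with hqh
  -- values of ρ on generators
  have hρ0 : ρ (of i0) = SemidirectProduct.inl (Multiplicative.ofAdd (1 : Stmt15Aux.Ra)) := by
    simp [hρ, Stmt15Aux.ρf, Stmt15Aux.gens, hi0]
  have hρ1 : ρ (of i1) = SemidirectProduct.inr (Multiplicative.ofAdd ((1,0) : Stmt15Aux.Qa)) := by
    simp [hρ, Stmt15Aux.ρf, Stmt15Aux.gens, hi1]
  have hρ2 : ρ (of i2) = SemidirectProduct.inr (Multiplicative.ofAdd ((0,1) : Stmt15Aux.Qa)) := by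
    simp [hρ, Stmt15Aux.ρf, Stmt15Aux.gens, hi2]
  -- ψ on generators
  have hne01 : i0 ≠ i1 := by simp [hi0, hi1, Fin.ext_iff]
  have hne21 : i2 ≠ i1 := by simp [hi2, hi1, Fin.ext_iff]
  have hψ0 : ψ (of i0) = of i0 := by simpa [hne01] using hψ i0
  have hψ1 : ψ (of i1) = of i0 * of i1 * (of i0)⁻¹ := by simpa using hψ i1
  have hψ2 : ψ (of i2) = of i2 := by simpa [hne21] using hψ i2
  -- invariance of qh
  have hinv : ∀ x, qh (ψ x) = qh x := by
    have : qh.comp ψ.toMonoidHom = qh := by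
      apply FreeGroup.ext_hom
      intro i
      by_cases hii : i = i1
      · subst hii
        simp only [MonoidHom.comp_apply, MulEquiv.coe_toMonoidHom, hψ1, _root_.map_mul, _root_.map_inv]
        exact mul_inv_cancel_comm _ _
      · simp [hψ i, hii]
    intro x
    exact DFunLike.congr_fun this x
  refine ⟨qh.ker, MonoidHom.normal_ker qh, inferInstance, ?_, ?_, ?_⟩
  · intro a b
    simp only [MonoidHom.mem_ker, map_commutatorElement]
    exact commutatorElement_eq_one_iff_commute.mpr (Commute.all _ _)
  · intro x
    simp only [MonoidHom.mem_ker, hinv]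
  · intro φab hcomp hfin
    obtain ⟨k, hk, hpow⟩ := isOfFinOrder_iff_pow_eq_one.mp hfin
    -- iterates of ψ on generators
    have hψk0 : ∀ m : ℕ, (ψ ^ m) (of i0) = of i0 := by
      intro m; induction m with
      | zero => simp
      | succ m ih => rw [pow_succ, MulAut.mul_apply, hψ0, ih]
    have hψk1 : ∀ m : ℕ, (ψ ^ m) (of i1) = (of i0) ^ m * of i1 * ((of i0) ^ m)⁻¹ := by
      intro m; induction m with
      | zero => simp
      | succ m ih =>
        rw [pow_succ, MulAut.mul_apply, hψ1, _root_.map_mul, _root_.map_mul, _root_.map_inv, hψk0, ih,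
          pow_succ]
        group
    have hψk2 : ∀ m : ℕ, (ψ ^ m) (of i2) = of i2 := by
      intro m; induction m with
      | zero => simp
      | succ m ih => rw [pow_succ, MulAut.mul_apply, hψ2, ih]
    -- the test element
    set h₀ : FreeGroup (Fin n) := ⁅of i1, of i2⁆ with hh₀
    have hH0 : h₀ ∈ qh.ker := by
      simp only [hh₀, MonoidHom.mem_ker, map_commutatorElement]
      exact commutatorElement_eq_one_iff_commute.mpr (Commute.all _ _)
    have hmemiter : ∀ (m : ℕ) (x : FreeGroup (Fin n)), x ∈ qh.ker → (ψ ^ m) x ∈ qh.ker := by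
      intro m; induction m with
      | zero => intro x hx; simpa using hx
      | succ m ih =>
        intro x hx
        rw [pow_succ, MulAut.mul_apply]
        refine ih _ ?_
        simpa only [MonoidHom.mem_ker, hinv] using hx
    -- iterated compatibility
    have hiter : ∀ (m : ℕ) (x : FreeGroup (Fin n)) (hx : x ∈ qh.ker),
        (φab ^ m) (Abelianization.of ⟨x, hx⟩) =
          Abelianization.of (⟨(ψ ^ m) x, hmemiter m x hx⟩ : qh.ker) := by
      intro m; induction m with
      | zero =>
        intro x hx
        have hxx : (⟨(ψ ^ 0) x, hmemiter 0 x hx⟩ : qh.ker) = ⟨x, hx⟩ := by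
          ext; simp
        rw [hxx, pow_zero, MulAut.one_apply]
      | succ m ih =>
        intro x hx
        have hx' : ψ x ∈ qh.ker := by simpa only [MonoidHom.mem_ker, hinv] using hx
        have step : φab (Abelianization.of ⟨x, hx⟩) = Abelianization.of (⟨ψ x, hx'⟩ : qh.ker) :=
          hcomp ⟨x, hx⟩ ⟨ψ x, hx'⟩ rfl
        have hxx : (⟨(ψ ^ (m + 1)) x, hmemiter (m + 1) x hx⟩ : qh.ker) =
            ⟨(ψ ^ m) (ψ x), hmemiter m (ψ x) hx'⟩ := by
          ext; simp [pow_succ, MulAut.mul_apply]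
        rw [pow_succ, MulAut.mul_apply, step, ih (ψ x) hx', hxx]
    -- homomorphism from the kernel to Multiplicative Ra
    have hright : ∀ x ∈ qh.ker, (ρ x).right = 1 := by
      intro x hx
      simpa only [MonoidHom.mem_ker, hqh, MonoidHom.comp_apply, SemidirectProduct.rightHom_eq_right] using hx
    set fH : qh.ker →* Multiplicative Stmt15Aux.Ra :=
      { toFun := fun h => (ρ h.1).left
        map_one' := by simp
        map_mul' := by
          intro a b
          simp only [Subgroup.coe_mul, _root_.map_mul, SemidirectProduct.mul_left]
          rw [hright a.1 a.2]
          simp } with hfH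
    set LF : Abelianization qh.ker →* Multiplicative Stmt15Aux.Ra :=
      Abelianization.lift fH with hLF
    -- conclude
    have heq := hiter k h₀ hH0
    rw [hpow, MulAut.one_apply] at heq
    have heq2 := congrArg LF heq
    rw [hLF, Abelianization.lift_apply_of, Abelianization.lift_apply_of] at heq2
    -- compute both sides
    have hρh₀ : (ρ h₀).left = 1 := by
      rw [hh₀, map_commutatorElement, hρ1, hρ2, ← map_commutatorElement]
      rw [commutatorElement_eq_one_iff_commute.mpr (Commute.all _ _)]
      simp
    have hcast : Multiplicative.ofAdd (((k : ℤ) : Stmt15Aux.Ra)) =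
        (Multiplicative.ofAdd (1 : Stmt15Aux.Ra)) ^ k := by
      rw [← ofAdd_nsmul]
      congr 1
      push_cast [nsmul_eq_mul]
      ring
    have hρψk : ρ ((ψ ^ k) h₀) =
        ⁅(SemidirectProduct.inl (Multiplicative.ofAdd (((k : ℤ) : Stmt15Aux.Ra))) :
            Stmt15Aux.Gg) * SemidirectProduct.inr (Multiplicative.ofAdd ((1,0) : Stmt15Aux.Qa)) *
          (SemidirectProduct.inl (Multiplicative.ofAdd (((k : ℤ) : Stmt15Aux.Ra))))⁻¹,
          SemidirectProduct.inr (Multiplicative.ofAdd ((0,1) : Stmt15Aux.Qa))⁆ := by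
      rw [hh₀, map_commutatorElement, hψk1 k, hψk2 k, map_commutatorElement,
        _root_.map_mul, _root_.map_mul, _root_.map_inv, _root_.map_pow, hρ0, hρ1, hρ2, hcast,
        _root_.map_pow]
    have hfinal : ((⁅(SemidirectProduct.inl (Multiplicative.ofAdd (((k : ℤ) : Stmt15Aux.Ra))) :
            Stmt15Aux.Gg) * SemidirectProduct.inr (Multiplicative.ofAdd ((1,0) : Stmt15Aux.Qa)) *
          (SemidirectProduct.inl (Multiplicative.ofAdd (((k : ℤ) : Stmt15Aux.Ra))))⁻¹,
          SemidirectProduct.inr (Multiplicative.ofAdd ((0,1) : Stmt15Aux.Qa))⁆ :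
            Stmt15Aux.Gg)).left = 1 := by
      rw [← hρψk]
      simpa only [hfH, MonoidHom.coe_mk, OneHom.coe_mk, hρh₀] using heq2.symm
    exact absurd (Stmt15Aux.key k hfinal) (by omega)
end
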